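/- Let X be a finite subset of the projective space P^{s−1} over a field K. The following are equivalent: (a) the vanishing ideal I(X) is a monomial ideal; (b) I(X) = p_1 ∩ ⋯ ∩ p_m, where each p_i is an ideal generated by s−1 of the variables t_1,…,t_s; (c) X ⊆ {[e_1],…,[e_s]}, where e_i is the i-th unit vector of K^s. -/

import Mathlib

open MvPolynomial Finsupp Filter

namespace MDF

open scoped Classical

variable (K : Type*) [Field K] (s : ℕ)

/-- The Hilbert function of `S/I` in degree `d`: `dim_K (S_d / I_d)`. -/
noncomputable def hilbertFn (I : Ideal (MvPolynomial (Fin s) K)) (d : ℕ) : ℕ :=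
  Module.finrank K
    ((homogeneousSubmodule (Fin s) K d) ⧸
      (Submodule.comap (homogeneousSubmodule (Fin s) K d).subtype (I.restrictScalars K)))

/-- The Krull dimension of `S/I`, as a natural number. -/
noncomputable def krullDimQ (I : Ideal (MvPolynomial (Fin s) K)) : ℕ :=
  (((ringKrullDim (MvPolynomial (Fin s) K ⧸ I)).unbotD 0).untopD 0)

/-- The degree (multiplicity) of `S/I`: if `k = dim (S/I) ≥ 1`, it is
`(k-1)! · lim_d H_I(d)/d^(k-1)`, and it is `dim_K (S/I)` if `k = 0`. -/
noncomputable def degQ (I : Ideal (MvPolynomial (Fin s) K)) : ℕ :=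
  if krullDimQ K s I = 0 then Module.finrank K (MvPolynomial (Fin s) K ⧸ I)
  else Classical.epsilon (fun D : ℕ =>
    Tendsto (fun d : ℕ => (hilbertFn K s I d : ℝ) / (d : ℝ) ^ (krullDimQ K s I - 1)) atTop
      (nhds ((D : ℝ) / (Nat.factorial (krullDimQ K s I - 1)))))

/-- The regularity of the Hilbert function of `S/I`: the least `r ≥ 0` from which the
Hilbert function agrees with a polynomial (necessarily the Hilbert polynomial). -/
noncomputable def regQ (I : Ideal (MvPolynomial (Fin s) K)) : ℕ :=
  sInf { r : ℕ | ∃ P : Polynomial ℚ, ∀ d : ℕ, r ≤ d → (hilbertFn K s I d : ℚ) = P.eval (d : ℚ) }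

/-- The height of an ideal: the infimum of the heights of the primes containing it. -/
noncomputable def heightQ (I : Ideal (MvPolynomial (Fin s) K)) : ℕ∞ :=
  ⨅ p ∈ { p : PrimeSpectrum (MvPolynomial (Fin s) K) | I ≤ p.asIdeal }, Order.height p

/-- An ideal is a complete intersection if it can be generated by `ht(I)` elements. -/
def IsCompleteIntersection (I : Ideal (MvPolynomial (Fin s) K)) : Prop :=
  ∃ (n : ℕ) (f : Fin n → MvPolynomial (Fin s) K),
    (n : ℕ∞) = heightQ K s I ∧ I = Ideal.span (Set.range f)

/-- An ideal is unmixed if all its associated primes have the same height. -/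
def IsUnmixed (I : Ideal (MvPolynomial (Fin s) K)) : Prop :=
  ∀ p ∈ associatedPrimes (MvPolynomial (Fin s) K) (MvPolynomial (Fin s) K ⧸ I),
    ∀ q ∈ associatedPrimes (MvPolynomial (Fin s) K) (MvPolynomial (Fin s) K ⧸ I),
      heightQ K s p = heightQ K s q

/-- A graded (homogeneous) ideal: it contains all homogeneous components of its elements. -/
def IsGradedIdeal (I : Ideal (MvPolynomial (Fin s) K)) : Prop :=
  ∀ f ∈ I, ∀ n : ℕ, homogeneousComponent n f ∈ I

variable {K s} in
/-- A graded monomial order: one refining the total degree. -/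
def IsGradedOrder (m : MonomialOrder (Fin s)) : Prop :=
  ∀ a b : Fin s →₀ ℕ, a.degree < b.degree → m.toSyn a < m.toSyn b

variable {s} in
/-- The leading exponent (exponent of the leading monomial) of a polynomial with respect
to a monomial order.  (It is `0` by convention for the zero polynomial.) -/
noncomputable def lExp (m : MonomialOrder (Fin s)) (f : MvPolynomial (Fin s) K) :
    Fin s →₀ ℕ :=
  m.toSyn.symm (f.support.sup (fun a => m.toSyn a))

variable {s} in
/-- The initial ideal of `I`: the ideal generated by the leading monomials of the nonzero
elements of `I`. -/
noncomputable def initIdeal (m : MonomialOrder (Fin s)) (I : Ideal (MvPolynomial (Fin s) K)) :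
    Ideal (MvPolynomial (Fin s) K) :=
  Ideal.span { g | ∃ f ∈ I, f ≠ 0 ∧ g = monomial (lExp K m f) (1 : K) }

variable {s} in
/-- `f` is (or represents) a zero divisor of `S/I`. -/
def IsZeroDivOn (I : Ideal (MvPolynomial (Fin s) K)) (f : MvPolynomial (Fin s) K) : Prop :=
  ∃ g, g ∉ I ∧ f * g ∈ I

variable {s} in
/-- The set `M_{≺,d}` of exponents of the standard monomials of degree `d` that are
zero divisors of `S/in_≺(I)`. -/
noncomputable def Mset (m : MonomialOrder (Fin s)) (I : Ideal (MvPolynomial (Fin s) K))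
    (d : ℕ) : Set (Fin s →₀ ℕ) :=
  { a | a.degree = d ∧ monomial a (1 : K) ∉ initIdeal K m I ∧
      IsZeroDivOn K (initIdeal K m I) (monomial a (1 : K)) }

variable {s} in
/-- The set `F_{≺,d}` of nonzero zero divisors of `S/I` which are `K`-linear combinations
of standard monomials of degree `d`. -/
noncomputable def Fset (m : MonomialOrder (Fin s)) (I : Ideal (MvPolynomial (Fin s) K))
    (d : ℕ) : Set (MvPolynomial (Fin s) K) :=
  { f | f ≠ 0 ∧ (∀ a ∈ f.support, a.degree = d ∧ monomial a (1 : K) ∉ initIdeal K m I) ∧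
      IsZeroDivOn K I f }

variable {s} in
/-- The footprint function `fp_I`. -/
noncomputable def fp (m : MonomialOrder (Fin s)) (I : Ideal (MvPolynomial (Fin s) K))
    (d : ℕ) : ℤ :=
  if (Mset K m I d).Nonempty then
    (degQ K s I : ℤ) -
      sSup ((fun a => (degQ K s (initIdeal K m I ⊔ Ideal.span {monomial a (1 : K)}) : ℤ)) ''
        Mset K m I d)
  else (degQ K s I : ℤ)

variable {s} in
/-- The minimum distance function `δ_I`. -/
noncomputable def delta (m : MonomialOrder (Fin s)) (I : Ideal (MvPolynomial (Fin s) K))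
    (d : ℕ) : ℤ :=
  if (Fset K m I d).Nonempty then
    (degQ K s I : ℤ) -
      sSup ((fun f => (degQ K s (I ⊔ Ideal.span {f}) : ℤ)) '' Fset K m I d)
  else (degQ K s I : ℤ)

variable {s} in
/-- The vanishing ideal of a set of points of projective space: the ideal generated by
the homogeneous polynomials vanishing at (representatives of) all points of `X`. -/
noncomputable def vanishingIdeal (X : Set (Projectivization K (Fin s → K))) :
    Ideal (MvPolynomial (Fin s) K) :=
  Ideal.span { f | (∃ n, f.IsHomogeneous n) ∧ ∀ p ∈ X, eval p.rep f = 0 }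

variable {s} in
/-- The set of zeros in `X` of a (homogeneous) polynomial `f`. -/
def VX (X : Set (Projectivization K (Fin s → K))) (f : MvPolynomial (Fin s) K) :
    Set (Projectivization K (Fin s → K)) :=
  { p ∈ X | eval p.rep f = 0 }


variable {K s}

lemma eval_rep_eq_zero {𝕏 : Set (Projectivization K (Fin s → K))}
    {f : MvPolynomial (Fin s) K} (hf : f ∈ vanishingIdeal K 𝕏)
    {p : Projectivization K (Fin s → K)} (hp : p ∈ 𝕏) : eval p.rep f = 0 := by
  have h : vanishingIdeal K 𝕏 ≤ RingHom.ker (eval p.rep) :=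
    Ideal.span_le.mpr fun g hg => hg.2 p hp
  exact h hf

lemma degree_single (i : Fin s) (n : ℕ) : (Finsupp.single i n).degree = n := by
  rcases eq_or_ne n 0 with rfl | hn
  · simp [Finsupp.degree]
  · rw [Finsupp.degree_apply, Finsupp.support_single_ne_zero _ hn, Finset.sum_singleton,
      Finsupp.single_eq_same]

lemma eval_pi_single_of_homogeneous {i : Fin s} {c : K} {n : ℕ} {f : MvPolynomial (Fin s) K}
    (hf : f.IsHomogeneous n) :
    eval (Pi.single i c) f = coeff (Finsupp.single i n) f * c ^ n := by
  rw [eval_eq]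
  rw [Finset.sum_eq_single (Finsupp.single i n)]
  · by_cases h : Finsupp.single i n ∈ f.support
    · congr 1
      rcases eq_or_ne n 0 with rfl | hn
      · simp
      · rw [Finsupp.support_single_ne_zero _ hn, Finset.prod_singleton,
          Finsupp.single_eq_same, Pi.single_eq_same]
    · rw [MvPolynomial.notMem_support_iff.mp h, zero_mul, zero_mul]
  · intro m hm hne
    by_cases hsupp : ∃ j ∈ m.support, j ≠ i
    · obtain ⟨j, hj, hji⟩ := hsupp
      apply mul_eq_zero_of_right
      refine Finset.prod_eq_zero hj ?_
      rw [Pi.single_eq_of_ne hji, zero_pow (Finsupp.mem_support_iff.mp hj)]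
    · exfalso
      push_neg at hsupp
      have hm1 : m = Finsupp.single i (m i) :=
        Finsupp.eq_single_iff.mpr ⟨fun j hj => by
          simpa using hsupp j hj, rfl⟩
      have hdeg : m.degree = n :=
        not_ne_iff.mp fun hdn => MvPolynomial.mem_support_iff.mp hm (hf.coeff_eq_zero hdn)
      rw [hm1, degree_single] at hdeg
      exact hne (hm1.trans (by rw [hdeg]))
  · intro h
    rw [MvPolynomial.notMem_support_iff.mp h, zero_mul]

lemma polyEval_aeval (φ : Fin s → Polynomial K) (x : K) (f : MvPolynomial (Fin s) K) :
    Polynomial.eval x (aeval φ f) = eval (fun k => Polynomial.eval x (φ k)) f := by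
  induction f using MvPolynomial.induction_on with
  | C a => simp
  | add p q hp hq => simp [hp, hq]
  | mul_X p i hp => simp [hp]





lemma pi_single_one_ne_zero (i : Fin s) : (Pi.single i (1 : K) : Fin s → K) ≠ 0 :=
  fun h => one_ne_zero (α := K) (by simpa using congrFun h i)

lemma rep_single {p : Projectivization K (Fin s → K)} {i : Fin s}
    (h : p = Projectivization.mk K (Pi.single i (1 : K)) (pi_single_one_ne_zero i)) :
    p.rep i ≠ 0 ∧ ∀ k ≠ i, p.rep k = 0 := by
  obtain ⟨u, hu⟩ := (Projectivization.mk_eq_mk_iff K _ _ p.rep_nonzero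
    (pi_single_one_ne_zero i)).mp (h ▸ Projectivization.mk_rep p)
  constructor
  · rw [← hu]
    simp [Units.smul_def]
  · intro k hk
    rw [← hu]
    simp [Units.smul_def, Pi.single_eq_of_ne hk]


lemma mem_span_erase {i : Fin s} {f : MvPolynomial (Fin s) K} :
    f ∈ Ideal.span ((fun j => (X j : MvPolynomial (Fin s) K)) '' ((Finset.univ.erase i : Finset (Fin s)) : Set (Fin s)))
      ↔ ∀ m ∈ f.support, ∃ j, j ≠ i ∧ m j ≠ 0 := by
  rw [show ((fun j => (X j : MvPolynomial (Fin s) K)) '' _) = (MvPolynomial.X '' ((Finset.univ.erase i : Finset (Fin s)) : Set (Fin s))) from rfl,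
    mem_ideal_span_X_image]
  simp [Finset.mem_erase]

lemma eval_rep_span_erase {p : Projectivization K (Fin s → K)} {i : Fin s}
    (h : p = Projectivization.mk K (Pi.single i (1 : K)) (pi_single_one_ne_zero i))
    {f : MvPolynomial (Fin s) K}
    (hf : f ∈ Ideal.span ((fun j => (X j : MvPolynomial (Fin s) K)) '' ((Finset.univ.erase i : Finset (Fin s)) : Set (Fin s)))) :
    eval p.rep f = 0 := by
  obtain ⟨-, h2⟩ := rep_single h
  have hle : Ideal.span ((fun j => (X j : MvPolynomial (Fin s) K)) '' ((Finset.univ.erase i : Finset (Fin s)) : Set (Fin s)))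
      ≤ RingHom.ker (eval p.rep) := by
    rw [Ideal.span_le]
    rintro g ⟨j, hj, rfl⟩
    simp only [Finset.coe_erase, Set.mem_diff, Finset.coe_univ, Set.mem_univ, true_and,
      Set.mem_singleton_iff] at hj
    simp [RingHom.mem_ker, h2 j hj]
  exact hle hf

lemma rep_eq_single {p : Projectivization K (Fin s → K)} {i : Fin s}
    (h : p = Projectivization.mk K (Pi.single i (1 : K)) (pi_single_one_ne_zero i)) :
    p.rep = Pi.single i (p.rep i) := by
  obtain ⟨-, h2⟩ := rep_single h
  funext k
  rcases eq_or_ne k i with rfl | hk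
  · simp
  · simp [Pi.single_eq_of_ne hk, h2 k hk]

lemma eq_iInf {𝕏 : Set (Projectivization K (Fin s → K))} (hfin : 𝕏.Finite)
    (idx : Projectivization K (Fin s → K) → Fin s)
    (hidx : ∀ p ∈ 𝕏, p = Projectivization.mk K (Pi.single (idx p) (1 : K))
      (pi_single_one_ne_zero (idx p))) :
    vanishingIdeal K 𝕏 = ⨅ q : hfin.toFinset,
      Ideal.span ((fun j => (X j : MvPolynomial (Fin s) K)) ''
        ((Finset.univ.erase (idx q.1) : Finset (Fin s)) : Set (Fin s))) := by
  apply le_antisymm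
  · rw [vanishingIdeal, Ideal.span_le]
    rintro f ⟨⟨n, hfh⟩, hvan⟩
    rw [SetLike.mem_coe, Ideal.mem_iInf]
    rintro ⟨q, hq⟩
    have hq' : q ∈ 𝕏 := hfin.mem_toFinset.mp hq
    have hrep := rep_eq_single (hidx q hq')
    have hev := hvan q hq'
    rw [hrep, eval_pi_single_of_homogeneous hfh] at hev
    have hu : q.rep (idx q) ≠ 0 := (rep_single (hidx q hq')).1
    have hcoeff : coeff (Finsupp.single (idx q) n) f = 0 := by
      rcases mul_eq_zero.mp hev with h | h
      · exact h
      · exact absurd (pow_eq_zero_iff'.mp h).1 hu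
    rw [mem_span_erase]
    intro m hm
    by_contra hcon
    push_neg at hcon
    have hm1 : m = Finsupp.single (idx q) (m (idx q)) :=
      Finsupp.eq_single_iff.mpr ⟨fun j hj => by
        by_contra hji
        exact Finsupp.mem_support_iff.mp hj (hcon j (by simpa using hji)), rfl⟩
    have hdeg : m.degree = n :=
      not_ne_iff.mp fun hdn => MvPolynomial.mem_support_iff.mp hm (hfh.coeff_eq_zero hdn)
    rw [hm1, degree_single] at hdeg
    rw [hm1, hdeg] at hm
    exact MvPolynomial.mem_support_iff.mp hm hcoeff
  · intro f hf
    rw [Ideal.mem_iInf] at hf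
    have hsum := sum_homogeneousComponent f
    rw [← hsum]
    apply Ideal.sum_mem
    intro n _
    apply Ideal.subset_span
    refine ⟨⟨n, homogeneousComponent_isHomogeneous n f⟩, ?_⟩
    intro q hq'
    have hqmem : q ∈ hfin.toFinset := hfin.mem_toFinset.mpr hq'
    apply eval_rep_span_erase (hidx q hq')
    rw [mem_span_erase]
    intro m hm
    have hmf : m ∈ f.support := by
      by_contra hcon
      have : coeff m (homogeneousComponent n f) = 0 := by
        rw [coeff_homogeneousComponent]
        simp [MvPolynomial.notMem_support_iff.mp hcon]
      exact MvPolynomial.mem_support_iff.mp hm this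
    exact (mem_span_erase.mp (hf ⟨q, hqmem⟩)) m hmf

lemma lin_hom (a b : K) (k l : Fin s) :
    ((C a * X k - C b * X l : MvPolynomial (Fin s) K)).IsHomogeneous 1 := by
  have h1 : (C a * X k : MvPolynomial (Fin s) K).IsHomogeneous 1 := by
    simpa using (isHomogeneous_C (Fin s) a).mul (isHomogeneous_X K k)
  have h2 : (C b * X l : MvPolynomial (Fin s) K).IsHomogeneous 1 := by
    simpa using (isHomogeneous_C (Fin s) b).mul (isHomogeneous_X K l)
  exact h1.sub h2

lemma core {𝕏 : Set (Projectivization K (Fin s → K))} (hfin : 𝕏.Finite)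
    (hmon : ∀ f ∈ vanishingIdeal K 𝕏, ∀ m ∈ f.support,
      (monomial m (1 : K) : MvPolynomial (Fin s) K) ∈ vanishingIdeal K 𝕏) :
    ∀ p ∈ 𝕏, ∃ i : Fin s,
      p = Projectivization.mk K (Pi.single i (1 : K)) (pi_single_one_ne_zero i) := by
  intro p hp
  set α := p.rep with hα
  have hα0 : α ≠ 0 := p.rep_nonzero
  obtain ⟨i, hi⟩ : ∃ i, α i ≠ 0 := by
    by_contra h
    push_neg at h
    exact hα0 (funext h)
  have key : ∀ j, j ≠ i → α j = 0 := by
    intro j hji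
    by_contra hj
    -- separating data for points other than p
    have sep : ∀ q : Projectivization K (Fin s → K), ∃ k l : Fin s,
        (q ∈ 𝕏 → q ≠ p → q.rep l * α k - q.rep k * α l ≠ 0) := by
      intro q
      by_cases hq : q ∈ 𝕏 ∧ q ≠ p
      · by_contra hcon
        push_neg at hcon
        apply hq.2
        have hall : ∀ k l : Fin s, q.rep l * α k = q.rep k * α l := by
          intro k l
          have h2 := (hcon k l).2.2
          linear_combination h2
        have hc : q.rep = (q.rep i / α i) • α := by
          funext k
          show q.rep k = (q.rep i / α i) • α k
          rw [smul_eq_mul, div_mul_eq_mul_div, eq_div_iff hi]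
          exact hall i k
        have hcne : q.rep i / α i ≠ 0 := by
          intro h0
          apply q.rep_nonzero
          rw [hc, h0, zero_smul]
        rw [← Projectivization.mk_rep q, ← Projectivization.mk_rep p]
        exact (Projectivization.mk_eq_mk_iff K _ _ q.rep_nonzero p.rep_nonzero).mpr
          ⟨Units.mk0 _ hcne, hc.symm⟩
      · exact ⟨i, i, fun h1 h2 => absurd ⟨h1, h2⟩ hq⟩
    choose kk ll hkl using sep
    set L : Projectivization K (Fin s → K) → MvPolynomial (Fin s) K := fun q =>
      if q = p then C (α j) * X i - C (α i) * X j
      else C (q.rep (ll q)) * X (kk q) - C (q.rep (kk q)) * X (ll q) with hL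
    set g : MvPolynomial (Fin s) K := ∏ q ∈ hfin.toFinset, L q with hgdef
    have hLhom : ∀ q, (L q).IsHomogeneous 1 := by
      intro q
      rcases eq_or_ne q p with rfl | hqp
      · simpa only [hL, if_pos rfl] using lin_hom (α j) (α i) i j
      · simpa only [hL, if_neg hqp] using lin_hom _ _ _ _
    have hLzero : ∀ q ∈ 𝕏, eval q.rep (L q) = 0 := by
      intro q hq
      rcases eq_or_ne q p with rfl | hqp
      · simp only [hL, if_pos rfl, map_sub, map_mul, eval_C, eval_X]
        ring
      · simp only [hL, if_neg hqp, map_sub, map_mul, eval_C, eval_X]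
        ring
    have hg : g ∈ vanishingIdeal K 𝕏 := by
      apply Ideal.subset_span
      constructor
      · exact ⟨hfin.toFinset.card, by
          simpa using IsHomogeneous.prod hfin.toFinset L (fun _ => 1)
            (fun q _ => hLhom q)⟩
      · intro q hq
        rw [hgdef, map_prod]
        exact Finset.prod_eq_zero (hfin.mem_toFinset.mpr hq) (hLzero q hq)
    -- the partial-evaluation algebra map
    set φP : Fin s → Polynomial K := fun k => if k = i then Polynomial.X else Polynomial.C (α k)
      with hφP
    have hpt : ∀ x : K, (fun k => Polynomial.eval x (φP k)) = Function.update α i x := by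
      intro x
      funext k
      rcases eq_or_ne k i with rfl | hk
      · simp [hφP]
      · simp [hφP, hk, Function.update_of_ne hk]
    -- ψ g ≠ 0
    have hψne : (aeval φP g : Polynomial K) ≠ 0 := by
      rw [hgdef, map_prod]
      rw [Finset.prod_ne_zero_iff]
      intro q hq
      have hq' : q ∈ 𝕏 := hfin.mem_toFinset.mp hq
      rcases eq_or_ne q p with rfl | hqp
      · intro h0
        have h1 := polyEval_aeval φP (α i + 1) (L q)
        rw [h0, hpt] at h1
        simp only [hL, if_pos rfl, map_sub, map_mul, eval_C, eval_X, Polynomial.eval_zero,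
          Function.update_self, Function.update_of_ne hji] at h1
        apply hj
        linear_combination -h1
      · intro h0
        have hupd : Function.update α i (α i) = α := by
          funext k
          rcases eq_or_ne k i with rfl | hk
          · simp
          · simp [Function.update_of_ne hk]
        have h1 := polyEval_aeval φP (α i) (L q)
        rw [h0, hpt, hupd] at h1
        simp only [hL, if_neg hqp, map_sub, map_mul, eval_C, eval_X,
          Polynomial.eval_zero] at h1
        exact hkl q hq' hqp h1.symm
    -- ψ g = 0
    have hψzero : (aeval φP g : Polynomial K) = 0 := by
      have hmono : ∀ m ∈ g.support, ∃ k, α k = 0 ∧ m k ≠ 0 := by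
        intro m hm
        have h1 := hmon g hg m hm
        have h2 : eval α (monomial m (1 : K)) = 0 := eval_rep_eq_zero h1 hp
        rw [eval_monomial] at h2
        simp only [one_mul] at h2
        rw [Finsupp.prod] at h2
        obtain ⟨k, hk1, hk2⟩ := Finset.prod_eq_zero_iff.mp h2
        have hmk : m k ≠ 0 := Finsupp.mem_support_iff.mp hk1
        exact ⟨k, pow_eq_zero_iff hmk |>.mp hk2, hmk⟩
      nth_rewrite 1 [MvPolynomial.as_sum g]
      rw [map_sum]
      apply Finset.sum_eq_zero
      intro m hm
      obtain ⟨k, hk0, hkm⟩ := hmono m hm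
      have hki : k ≠ i := fun h => hi (h ▸ hk0)
      rw [aeval_monomial]
      apply mul_eq_zero_of_right
      rw [Finsupp.prod]
      refine Finset.prod_eq_zero (Finsupp.mem_support_iff.mpr hkm) ?_
      have : φP k = 0 := by simp [hφP, if_neg hki, hk0]
      rw [this, zero_pow hkm]
    exact hψne hψzero
  -- conclude p = [e i]
  refine ⟨i, ?_⟩
  rw [← Projectivization.mk_rep p]
  refine (Projectivization.mk_eq_mk_iff K _ _ p.rep_nonzero (pi_single_one_ne_zero i)).mpr
    ⟨Units.mk0 (α i) hi, ?_⟩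
  funext k
  rcases eq_or_ne k i with rfl | hk
  · simp [Units.smul_def, ← hα]
  · simp [Units.smul_def, Pi.single_eq_of_ne hk, key k hk, ← hα]



/-- For a finite set `𝕏` of projective points, the following are
equivalent: (a) `I(𝕏)` is a monomial ideal; (b) `I(𝕏)` is a finite intersection of
ideals generated by `s-1` of the variables; (c) `𝕏` is contained in the set of points
`[e_1], …, [e_s]` given by the unit vectors. -/
theorem vanishingIdeal_monomial_tfae
    {K : Type*} [Field K] {s : ℕ} (hs : 2 ≤ s)
    (𝕏 : Set (Projectivization K (Fin s → K))) (hfin : 𝕏.Finite) :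
    List.TFAE [
      (∃ A : Set (Fin s →₀ ℕ),
        vanishingIdeal K 𝕏 =
          Ideal.span ((fun a => (monomial a (1 : K) : MvPolynomial (Fin s) K)) '' A)),
      (∃ (mm : ℕ) (v : Fin mm → Finset (Fin s)), (∀ i, (v i).card = s - 1) ∧
        vanishingIdeal K 𝕏 =
          ⨅ i, Ideal.span ((fun j => (X j : MvPolynomial (Fin s) K)) '' (v i))),
      𝕏 ⊆ { q | ∃ i : Fin s,
        q = Projectivization.mk K (Pi.single i (1 : K)) (fun h => one_ne_zero (α := K) (by simpa using congrFun h i)) } ] := by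
  have hidx : (𝕏 ⊆ { q | ∃ i : Fin s,
        q = Projectivization.mk K (Pi.single i (1 : K)) (fun h => one_ne_zero (α := K) (by simpa using congrFun h i)) }) →
      ∃ idx : Projectivization K (Fin s → K) → Fin s, ∀ p ∈ 𝕏,
        p = Projectivization.mk K (Pi.single (idx p) (1 : K)) (pi_single_one_ne_zero (idx p)) := by
    intro h3
    have : ∀ p : Projectivization K (Fin s → K), ∃ i : Fin s, p ∈ 𝕏 →
        p = Projectivization.mk K (Pi.single i (1 : K)) (pi_single_one_ne_zero i) := by
      intro p
      by_cases hp : p ∈ 𝕏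
      · obtain ⟨i, hi⟩ := h3 hp
        exact ⟨i, fun _ => hi⟩
      · exact ⟨⟨0, by omega⟩, fun h => absurd h hp⟩
    choose idx hidx using this
    exact ⟨idx, fun p hp => hidx p hp⟩
  tfae_have 1 → 3 := by
    intro h1 p hp
    obtain ⟨A, hA⟩ := h1
    have hmon : ∀ f ∈ vanishingIdeal K 𝕏, ∀ m ∈ f.support,
        (monomial m (1 : K) : MvPolynomial (Fin s) K) ∈ vanishingIdeal K 𝕏 := by
      intro f hf m hm
      rw [hA] at hf ⊢
      obtain ⟨a, ha, hle⟩ := mem_ideal_span_monomial_image.mp hf m hm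
      rw [mem_ideal_span_monomial_image]
      intro m' hm'
      have hmm : m' = m := by simpa [support_monomial] using hm'
      exact ⟨a, ha, hmm ▸ hle⟩
    exact core hfin hmon p hp
  tfae_have 2 → 3 := by
    intro h2 p hp
    obtain ⟨mm, v, hv, hEq⟩ := h2
    have hmon : ∀ f ∈ vanishingIdeal K 𝕏, ∀ m ∈ f.support,
        (monomial m (1 : K) : MvPolynomial (Fin s) K) ∈ vanishingIdeal K 𝕏 := by
      intro f hf m hm
      rw [hEq] at hf ⊢
      rw [Ideal.mem_iInf] at hf ⊢
      intro k
      rw [mem_ideal_span_X_image] at *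
      intro m' hm'
      have hmm : m' = m := by simpa [support_monomial] using hm'
      subst hmm
      exact mem_ideal_span_X_image.mp (hf k) m' hm
    exact core hfin hmon p hp
  tfae_have 3 → 1 := by
    intro h3
    obtain ⟨idx, hidxp⟩ := hidx h3
    have heq := eq_iInf hfin idx hidxp
    refine ⟨{m | (monomial m (1 : K) : MvPolynomial (Fin s) K) ∈ vanishingIdeal K 𝕏}, ?_⟩
    apply le_antisymm
    · intro f hf
      have hf2 := hf
      rw [heq, Ideal.mem_iInf] at hf2
      have hmem : ∀ m ∈ f.support, (monomial m (1 : K) : MvPolynomial (Fin s) K) ∈ vanishingIdeal K 𝕏 := by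
        intro m hm
        rw [heq, Ideal.mem_iInf]
        intro q
        rw [mem_span_erase]
        intro m' hm'
        have hmm : m' = m := by simpa [support_monomial] using hm'
        subst hmm
        exact (mem_span_erase.mp (hf2 q)) m' hm
      nth_rewrite 1 [MvPolynomial.as_sum f]
      apply Ideal.sum_mem
      intro m hm
      have hrw : (monomial m (coeff m f) : MvPolynomial (Fin s) K)
          = C (coeff m f) * monomial m (1 : K) := by
        rw [C_mul_monomial, mul_one]
      rw [hrw]
      exact Ideal.mul_mem_left _ _ (Ideal.subset_span ⟨m, hmem m hm, rfl⟩)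
    · rw [Ideal.span_le]
      rintro g ⟨m, hmA, rfl⟩
      exact hmA
  tfae_have 3 → 2 := by
    intro h3
    obtain ⟨idx, hidxp⟩ := hidx h3
    have heq := eq_iInf hfin idx hidxp
    classical
    refine ⟨hfin.toFinset.card, fun k => Finset.univ.erase (idx (hfin.toFinset.equivFin.symm k)),
      fun k => ?_, ?_⟩
    · rw [Finset.card_erase_of_mem (Finset.mem_univ _), Finset.card_univ, Fintype.card_fin]
    · rw [heq]
      apply le_antisymm
      · exact le_iInf fun k => iInf_le _ (hfin.toFinset.equivFin.symm k)
      · refine le_iInf fun q => ?_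
        have h := iInf_le (fun k => Ideal.span ((fun j => (X j : MvPolynomial (Fin s) K)) ''
          ((Finset.univ.erase (idx (hfin.toFinset.equivFin.symm k)) : Finset (Fin s)) : Set (Fin s))))
          (hfin.toFinset.equivFin q)
        simpa using h
  tfae_finish


end MDF
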